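/- Fix x_u, x_v ∈ [0,1] with x = d_L(x_u, x_v), let 0 ≤ r_d ≤ r_s with r_s > 2r_d, x ≤ r_s and x + 2r_s ≤ 1, and let Z_1, …, Z_{m₁} and W_1, …, W_{m₂} be i.i.d. uniform on [0,1]. Then: (i) the count #{i ≤ m₁ : d_L(Z_i, x_u) > r_s and d_L(Z_i, x_v) > r_s} has the binomial distribution Bin(m₁, 1 − (x + 2r_s)); (ii) if x ≤ 2r_d, the count #{j ≤ m₂ : d_L(W_j, x_u) > r_d and d_L(W_j, x_v) > r_d} has distribution Bin(m₂, 1 − (x + 2r_d)), and if x > 2r_d it has distribution Bin(m₂, 1 − 4r_d). -/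

import Mathlib

open MeasureTheory

/-- The circular distance on `[0,1]`. -/
noncomputable def dL (x y : ℝ) : ℝ := min |x - y| (1 - |x - y|)

/-- The uniform (probability) measure on `[0,1]`. -/
noncomputable def unif : Measure ℝ := volume.restrict (Set.Icc (0 : ℝ) 1)

/-- The binomial probability `Bin(m,p)` of the value `k`. -/
noncomputable def binomPMF (m : ℕ) (p : ℝ) (k : ℕ) : ENNReal :=
  ENNReal.ofReal ((m.choose k : ℝ) * p ^ k * (1 - p) ^ (m - k))

noncomputable def circN (t : ℝ) : ℝ := min (Int.fract t) (1 - Int.fract t)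

lemma circN_add_one (t : ℝ) : circN (t + 1) = circN t := by
  simp [circN, Int.fract_add_one]

lemma measurable_circN : Measurable circN := by
  unfold circN
  exact (measurable_fract).min (measurable_const.sub measurable_fract)

lemma dL_eq_circN {a b : ℝ} (h1 : -1 ≤ a - b) (h2 : a - b ≤ 1) :
    dL a b = circN (a - b) := by
  set t := a - b with ht
  rcases le_or_gt 0 t with h0 | h0
  · rcases lt_or_eq_of_le h2 with h2' | h2'
    · rw [dL, circN, Int.fract_eq_self.mpr ⟨h0, h2'⟩, abs_of_nonneg h0]
    · rw [dL, circN, ← ht, h2']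
      norm_num
  · have hfl : ⌊t⌋ = -1 := by
      apply Int.floor_eq_iff.mpr
      constructor <;> push_cast <;> linarith
    have : Int.fract t = t + 1 := by
      rw [Int.fract, hfl]; push_cast; ring
    rw [dL, circN, this, abs_of_neg h0]
    rw [min_comm]
    congr 1 <;> ring

lemma per_trans {A : Set ℝ} (hA : MeasurableSet A) (hper : ∀ z, z + 1 ∈ A ↔ z ∈ A)
    {u : ℝ} (hu0 : 0 ≤ u) (hu1 : u ≤ 1) :
    volume ((fun z => z + u) ⁻¹' A ∩ Set.Ico 0 1) = volume (A ∩ Set.Ico 0 1) := by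
  have hmp := measurePreserving_add_right (volume : Measure ℝ) u
  have h1 : (fun z => z + u) ⁻¹' A ∩ Set.Ico 0 1
      = (fun z => z + u) ⁻¹' (A ∩ Set.Ico u (1 + u)) := by
    ext z
    simp only [Set.mem_inter_iff, Set.mem_preimage, Set.mem_Ico]
    constructor
    · rintro ⟨hz, h0, h1⟩; exact ⟨hz, by linarith, by linarith⟩
    · rintro ⟨hz, h0, h1⟩; exact ⟨hz, by linarith, by linarith⟩
  have h2 : volume ((fun z => z + u) ⁻¹' (A ∩ Set.Ico u (1 + u)))
      = volume (A ∩ Set.Ico u (1 + u)) :=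
    hmp.measure_preimage ((hA.inter measurableSet_Ico).nullMeasurableSet)
  have h3 : A ∩ Set.Ico u (1 + u) = (A ∩ Set.Ico u 1) ∪ (A ∩ Set.Ico 1 (1 + u)) := by
    rw [← Set.inter_union_distrib_left, Set.Ico_union_Ico_eq_Ico hu1 (by linarith)]
  have h4 : volume (A ∩ Set.Ico 1 (1 + u)) = volume (A ∩ Set.Ico 0 u) := by
    have hpre : (fun z => z + 1) ⁻¹' (A ∩ Set.Ico 1 (1 + u)) = A ∩ Set.Ico 0 u := by
      ext z
      simp only [Set.mem_inter_iff, Set.mem_preimage, Set.mem_Ico]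
      constructor
      · rintro ⟨hz, ha, hb⟩; exact ⟨(hper z).mp hz, by linarith, by linarith⟩
      · rintro ⟨hz, ha, hb⟩; exact ⟨(hper z).mpr hz, by linarith, by linarith⟩
    rw [← hpre]
    exact ((measurePreserving_add_right (volume : Measure ℝ) 1).measure_preimage
      ((hA.inter measurableSet_Ico).nullMeasurableSet)).symm
  have hdisj : Disjoint (A ∩ Set.Ico u 1) (A ∩ Set.Ico 1 (1 + u)) :=
    Disjoint.mono Set.inter_subset_right Set.inter_subset_right
      (Set.Ico_disjoint_Ico_same)
  have h5 : Set.Ico (0:ℝ) 1 = Set.Ico 0 u ∪ Set.Ico u 1 :=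
    (Set.Ico_union_Ico_eq_Ico hu0 hu1).symm
  have hdisj2 : Disjoint (A ∩ Set.Ico 0 u) (A ∩ Set.Ico u 1) :=
    Disjoint.mono Set.inter_subset_right Set.inter_subset_right
      (Set.Ico_disjoint_Ico_same)
  rw [h1, h2, h3, measure_union hdisj (hA.inter measurableSet_Ico), h4,
    h5, Set.inter_union_distrib_left,
    measure_union hdisj2 (hA.inter measurableSet_Ico)]
  ring

lemma A0_iff {x r : ℝ} (hx0 : 0 ≤ x) (hx2 : x ≤ 1/2) (hr : 0 ≤ r) (hr1 : 2*r ≤ 1)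
    {z : ℝ} (hz : z ∈ Set.Ico (0:ℝ) 1) :
    (r < circN z ∧ r < circN (z - x)) ↔
      (z ∈ Set.Ioo (x + r) (1 - r) ∪ Set.Ioo r (x - r)) := by
  obtain ⟨hz0, hz1⟩ := hz
  have hfz : Int.fract z = z := Int.fract_eq_self.mpr ⟨hz0, hz1⟩
  rcases le_or_gt x z with hxz | hxz
  · have hf2 : Int.fract (z - x) = z - x :=
      Int.fract_eq_self.mpr ⟨by linarith, by linarith⟩
    simp only [circN, hfz, hf2, lt_min_iff, Set.mem_union, Set.mem_Ioo]
    constructor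
    · rintro ⟨⟨h1, h2⟩, h3, h4⟩; left; exact ⟨by linarith, by linarith⟩
    · rintro (⟨h1, h2⟩ | ⟨h1, h2⟩)
      · exact ⟨⟨by linarith, by linarith⟩, by linarith, by linarith⟩
      · exact absurd (by linarith : z < z) (lt_irrefl z)
  · have hfl : ⌊z - x⌋ = -1 := by
      apply Int.floor_eq_iff.mpr
      constructor <;> push_cast <;> linarith
    have hf2 : Int.fract (z - x) = z - x + 1 := by
      rw [Int.fract, hfl]; push_cast; ring
    simp only [circN, hfz, hf2, lt_min_iff, Set.mem_union, Set.mem_Ioo]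
    constructor
    · rintro ⟨⟨h1, h2⟩, h3, h4⟩; right; exact ⟨by linarith, by linarith⟩
    · rintro (⟨h1, h2⟩ | ⟨h1, h2⟩)
      · exact absurd (by linarith : z < z) (lt_irrefl z)
      · exact ⟨⟨by linarith, by linarith⟩, by linarith, by linarith⟩

lemma A0_vol {x r : ℝ} (hx0 : 0 ≤ x) (hx2 : x ≤ 1/2) (hr : 0 ≤ r) (hr1 : 2*r ≤ 1)
    (hsum : min x (2*r) + 2*r ≤ 1) :
    volume ({z | r < circN z ∧ r < circN (z - x)} ∩ Set.Ico 0 1)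
      = ENNReal.ofReal (1 - (min x (2*r) + 2*r)) := by
  have hset : {z | r < circN z ∧ r < circN (z - x)} ∩ Set.Ico 0 1
      = Set.Ioo (x + r) (1 - r) ∪ Set.Ioo r (x - r) := by
    ext z
    constructor
    · rintro ⟨hP, hz⟩; exact (A0_iff hx0 hx2 hr hr1 hz).mp hP
    · intro hz
      have hzIco : z ∈ Set.Ico (0:ℝ) 1 := by
        rcases hz with ⟨h1, h2⟩ | ⟨h1, h2⟩
        · exact ⟨by linarith, by linarith⟩
        · exact ⟨by linarith, by linarith⟩
      exact ⟨(A0_iff hx0 hx2 hr hr1 hzIco).mpr hz, hzIco⟩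
  have hdisj : Disjoint (Set.Ioo (x + r) (1 - r)) (Set.Ioo r (x - r)) := by
    rw [Set.disjoint_left]
    rintro z ⟨h1, h2⟩ ⟨h3, h4⟩
    linarith
  rw [hset, measure_union hdisj measurableSet_Ioo, Real.volume_Ioo, Real.volume_Ioo]
  rcases le_total x (2*r) with hc | hc
  · rw [min_eq_left hc] at hsum ⊢
    rw [ENNReal.ofReal_eq_zero.mpr (by linarith : x - r - r ≤ 0), add_zero]
    congr 1; ring
  · rw [min_eq_right hc] at hsum ⊢
    rw [← ENNReal.ofReal_add (by linarith) (by linarith)]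
    congr 1; ring

lemma dL_comm (a b : ℝ) : dL a b = dL b a := by rw [dL, dL, abs_sub_comm]

lemma unif_good_aux {c₁ c₂ r : ℝ} (h₁ : c₁ ∈ Set.Icc (0:ℝ) 1) (h₂ : c₂ ∈ Set.Icc (0:ℝ) 1)
    (hr : 0 ≤ r) (h12 : c₁ ≤ c₂)
    (hsum : min (dL c₁ c₂) (2*r) + 2*r ≤ 1) :
    unif {z | r < dL z c₁ ∧ r < dL z c₂}
      = ENNReal.ofReal (1 - (min (dL c₁ c₂) (2*r) + 2*r)) := by
  obtain ⟨h10, h11⟩ := h₁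
  obtain ⟨h20, h21⟩ := h₂
  set d : ℝ := c₂ - c₁ with hd
  have hd0 : 0 ≤ d := by simp [hd]; linarith
  have hd1 : d ≤ 1 := by simp [hd]; linarith
  have hdL : dL c₁ c₂ = min d (1 - d) := by
    rw [dL, abs_sub_comm, abs_of_nonneg hd0]
  set x : ℝ := min d (1 - d) with hxdef
  have hx0 : 0 ≤ x := le_min hd0 (by linarith)
  have hx2 : x ≤ 1/2 := by
    rcases le_total d (1-d) with h | h
    · rw [hxdef, min_eq_left h]; linarith
    · rw [hxdef, min_eq_right h]; linarith
  rw [hdL] at hsum ⊢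
  have hr1 : 2*r ≤ 1 := by
    have : (0:ℝ) ≤ min x (2*r) := le_min hx0 (by linarith)
    linarith
  set A : Set ℝ := {z | r < circN (z - c₁) ∧ r < circN (z - c₂)} with hA
  have hAmeas : MeasurableSet A := by
    apply MeasurableSet.inter
    · exact measurableSet_lt measurable_const (measurable_circN.comp (measurable_id.sub_const c₁))
    · exact measurableSet_lt measurable_const (measurable_circN.comp (measurable_id.sub_const c₂))
  have hper : ∀ z : ℝ, z + 1 ∈ A ↔ z ∈ A := by
    intro z
    have e1 : z + 1 - c₁ = z - c₁ + 1 := by ring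
    have e2 : z + 1 - c₂ = z - c₂ + 1 := by ring
    simp only [hA, Set.mem_setOf_eq, e1, e2, circN_add_one]
  have step1 : unif {z | r < dL z c₁ ∧ r < dL z c₂}
      = volume ({z | r < dL z c₁ ∧ r < dL z c₂} ∩ Set.Icc 0 1) :=
    Measure.restrict_apply' measurableSet_Icc
  have step2 : {z | r < dL z c₁ ∧ r < dL z c₂} ∩ Set.Icc 0 1 = A ∩ Set.Icc 0 1 := by
    ext z
    simp only [Set.mem_inter_iff, Set.mem_setOf_eq, Set.mem_Icc, hA]
    constructor
    · rintro ⟨⟨ha, hb⟩, hz0, hz1⟩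
      rw [dL_eq_circN (by linarith) (by linarith)] at ha
      rw [dL_eq_circN (by linarith) (by linarith)] at hb
      exact ⟨⟨ha, hb⟩, hz0, hz1⟩
    · rintro ⟨⟨ha, hb⟩, hz0, hz1⟩
      rw [← dL_eq_circN (by linarith) (by linarith)] at ha
      rw [← dL_eq_circN (by linarith) (by linarith)] at hb
      exact ⟨⟨ha, hb⟩, hz0, hz1⟩
  have step3 : volume (A ∩ Set.Icc 0 1) = volume (A ∩ Set.Ico 0 1) := by
    apply measure_congr
    exact (Filter.EventuallyEq.refl _ A).inter Ico_ae_eq_Icc.symm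
  rw [step1, step2, step3]
  have key : volume (A ∩ Set.Ico 0 1)
      = volume ({z | r < circN z ∧ r < circN (z - x)} ∩ Set.Ico 0 1) := by
    rcases le_total d (1 - d) with hcase | hcase
    · have hx : x = d := min_eq_left hcase
      have hpre : (fun z => z + c₁) ⁻¹' A = {z | r < circN z ∧ r < circN (z - x)} := by
        ext z
        have e1 : z + c₁ - c₁ = z := by ring
        have e2 : z + c₁ - c₂ = z - x := by rw [hx, hd]; ring
        simp only [hA, Set.mem_preimage, Set.mem_setOf_eq, e1, e2]
      rw [← per_trans hAmeas hper h10 h11, hpre]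
    · have hx : x = 1 - d := min_eq_right hcase
      have hpre : (fun z => z + c₂) ⁻¹' A = {z | r < circN z ∧ r < circN (z - x)} := by
        ext z
        have e1 : z + c₂ - c₂ = z := by ring
        have e2 : z + c₂ - c₁ = z - x + 1 := by rw [hx, hd]; ring
        simp only [hA, Set.mem_preimage, Set.mem_setOf_eq, e1, e2, circN_add_one]
        exact and_comm
      rw [← per_trans hAmeas hper h20 h21, hpre]
  rw [key]
  exact A0_vol hx0 hx2 hr hr1 hsum

lemma unif_good {c₁ c₂ r : ℝ} (h₁ : c₁ ∈ Set.Icc (0:ℝ) 1) (h₂ : c₂ ∈ Set.Icc (0:ℝ) 1)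
    (hr : 0 ≤ r)
    (hsum : min (dL c₁ c₂) (2*r) + 2*r ≤ 1) :
    unif {z | r < dL z c₁ ∧ r < dL z c₂}
      = ENNReal.ofReal (1 - (min (dL c₁ c₂) (2*r) + 2*r)) := by
  rcases le_total c₁ c₂ with h | h
  · exact unif_good_aux h₁ h₂ hr h hsum
  · have hs : {z : ℝ | r < dL z c₁ ∧ r < dL z c₂} = {z | r < dL z c₂ ∧ r < dL z c₁} :=
      Set.ext fun z => and_comm
    rw [hs, dL_comm c₁ c₂] at *
    exact unif_good_aux h₂ h₁ hr h hsum

lemma count_binom (μ : Measure ℝ) [IsProbabilityMeasure μ] (P : ℝ → Prop) [DecidablePred P]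
    (hS : MeasurableSet {z | P z})
    {p : ℝ} (hp0 : 0 ≤ p) (hp1 : p ≤ 1) (hμS : μ {z | P z} = ENNReal.ofReal p) (m k : ℕ) :
    (Measure.pi fun _ : Fin m => μ) {ω | (Finset.univ.filter fun i => P (ω i)).card = k}
      = binomPMF m p k := by
  classical
  set S : Set ℝ := {z | P z} with hSdef
  have hPS : ∀ z, P z ↔ z ∈ S := fun z => Iff.rfl
  have hcompl : μ Sᶜ = ENNReal.ofReal (1 - p) := by
    rw [measure_compl hS (measure_ne_top μ S), measure_univ, hμS,
      ← ENNReal.ofReal_one, ← ENNReal.ofReal_sub 1 hp0]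
  set B : Finset (Fin m) → Set (Fin m → ℝ) :=
    fun T => Set.pi Set.univ (fun i => if i ∈ T then S else Sᶜ) with hB
  have hBmem : ∀ (T : Finset (Fin m)) (ω : Fin m → ℝ),
      ω ∈ B T ↔ (Finset.univ.filter fun i => P (ω i)) = T := by
    intro T ω
    simp only [hB, Set.mem_pi, Set.mem_univ, forall_true_left]
    constructor
    · intro h
      ext i
      simp only [Finset.mem_filter, Finset.mem_univ, true_and]
      constructor
      · intro hi
        by_contra hiT
        have := h i
        rw [if_neg hiT] at this
        exact this hi
      · intro hi
        have := h i
        rwa [if_pos hi] at this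
    · intro h i
      by_cases hi : i ∈ T
      · rw [if_pos hi]
        have : i ∈ Finset.univ.filter fun j => P (ω j) := h ▸ hi
        exact (by simpa using this : P (ω i))
      · rw [if_neg hi]
        intro hmem
        apply hi
        rw [← h]
        simpa using (show P (ω i) from hmem)
  have hset : {ω : Fin m → ℝ | (Finset.univ.filter fun i => P (ω i)).card = k}
      = ⋃ T ∈ Finset.univ.powersetCard k, B T := by
    ext ω
    simp only [Set.mem_setOf_eq, Set.mem_iUnion, Finset.mem_powersetCard_univ]
    constructor
    · intro h
      exact ⟨Finset.univ.filter fun i => P (ω i), h, (hBmem _ ω).mpr rfl⟩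
    · rintro ⟨T, hT, hω⟩
      rw [(hBmem T ω).mp hω]
      exact hT
  have hBmeas : ∀ T : Finset (Fin m), MeasurableSet (B T) := by
    intro T
    apply MeasurableSet.univ_pi
    intro i
    by_cases hi : i ∈ T
    · rw [if_pos hi]; exact hS
    · rw [if_neg hi]; exact hS.compl
  have hdisj : Set.PairwiseDisjoint (↑(Finset.univ.powersetCard k : Finset (Finset (Fin m)))) B := by
    intro T hT T' hT' hne
    rw [Function.onFun, Set.disjoint_left]
    intro ω hω hω'
    exact hne (((hBmem T ω).mp hω) ▸ (hBmem T' ω).mp hω')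
  have hBvol : ∀ T ∈ Finset.univ.powersetCard k,
      (Measure.pi fun _ : Fin m => μ) (B T)
        = ENNReal.ofReal p ^ k * ENNReal.ofReal (1 - p) ^ (m - k) := by
    intro T hT
    have hTcard : T.card = k := Finset.mem_powersetCard_univ.mp hT
    rw [hB]
    rw [Measure.pi_pi]
    have : ∀ i : Fin m, μ (if i ∈ T then S else Sᶜ)
        = if i ∈ T then ENNReal.ofReal p else ENNReal.ofReal (1 - p) := by
      intro i
      by_cases hi : i ∈ T <;> simp [hi, hμS, hcompl]
    simp_rw [this]
    rw [Finset.prod_ite, Finset.prod_const, Finset.prod_const]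
    congr 1
    · congr 1
      rw [Finset.filter_mem_eq_inter, Finset.univ_inter, hTcard]
    · congr 1
      rw [Finset.filter_not, Finset.filter_mem_eq_inter, Finset.univ_inter,
        Finset.card_sdiff_of_subset (Finset.subset_univ T), Finset.card_univ, Fintype.card_fin, hTcard]
  rw [hset, measure_biUnion_finset hdisj (fun T _ => hBmeas T)]
  rw [Finset.sum_congr rfl hBvol, Finset.sum_const, Finset.card_powersetCard,
    Finset.card_univ, Fintype.card_fin, nsmul_eq_mul]
  rw [binomPMF, ENNReal.ofReal_mul (by positivity), ENNReal.ofReal_mul (by positivity),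
    ENNReal.ofReal_pow hp0, ENNReal.ofReal_pow (by linarith), ENNReal.ofReal_natCast, mul_assoc]


lemma measurable_dL_right (c : ℝ) : Measurable (fun z => dL z c) := by
  unfold dL
  exact ((measurable_id.sub_const c).abs).min
    (measurable_const.sub (measurable_id.sub_const c).abs)

instance : IsProbabilityMeasure unif := by
  constructor
  rw [unif, Measure.restrict_apply MeasurableSet.univ, Set.univ_inter, Real.volume_Icc]
  norm_num

/-- Lemma 6 of the paper: for two same-cluster vertices at
circular distance `x ≤ r_s` with `r_s > 2r_d` and `x + 2r_s ≤ 1`, the Motif-4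
count among `m₁` same-cluster points is `Bin(m₁, 1 − (x + 2r_s))`-distributed,
and among `m₂` other-cluster points it is `Bin(m₂, 1 − (x + 2r_d))`-distributed
if `x ≤ 2r_d` and `Bin(m₂, 1 − 4r_d)`-distributed if `x > 2r_d`. -/
theorem gbm_motif4_count_same (xu xv rs rd : ℝ) (m₁ m₂ : ℕ)
    (hxu : xu ∈ Set.Icc (0 : ℝ) 1) (hxv : xv ∈ Set.Icc (0 : ℝ) 1)
    (hrd : 0 ≤ rd) (hrsd : rd ≤ rs) (hrs2 : 2 * rd < rs)
    (hx : dL xu xv ≤ rs) (hx1 : dL xu xv + 2 * rs ≤ 1) :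
    (∀ k : ℕ,
      ((Measure.pi fun _ : Fin m₁ => unif).prod (Measure.pi fun _ : Fin m₂ => unif))
        {ω | (Finset.univ.filter fun i : Fin m₁ =>
              rs < dL (ω.1 i) xu ∧ rs < dL (ω.1 i) xv).card = k}
        = binomPMF m₁ (1 - (dL xu xv + 2 * rs)) k) ∧
    (dL xu xv ≤ 2 * rd → ∀ k : ℕ,
      ((Measure.pi fun _ : Fin m₁ => unif).prod (Measure.pi fun _ : Fin m₂ => unif))
        {ω | (Finset.univ.filter fun j : Fin m₂ =>
              rd < dL (ω.2 j) xu ∧ rd < dL (ω.2 j) xv).card = k}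
        = binomPMF m₂ (1 - (dL xu xv + 2 * rd)) k) ∧
    (2 * rd < dL xu xv → ∀ k : ℕ,
      ((Measure.pi fun _ : Fin m₁ => unif).prod (Measure.pi fun _ : Fin m₂ => unif))
        {ω | (Finset.univ.filter fun j : Fin m₂ =>
              rd < dL (ω.2 j) xu ∧ rd < dL (ω.2 j) xv).card = k}
        = binomPMF m₂ (1 - 4 * rd) k) := by
  have hx0 : 0 ≤ dL xu xv := by
    obtain ⟨h1, h2⟩ := hxu; obtain ⟨h3, h4⟩ := hxv
    have habs : |xu - xv| ≤ 1 := abs_sub_le_iff.mpr ⟨by linarith, by linarith⟩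
    exact le_min (abs_nonneg _) (by linarith)
  have hrs0 : 0 ≤ rs := le_trans (by linarith) hrs2.le
  have hSmeas : ∀ r c₁ c₂ : ℝ, MeasurableSet {z : ℝ | r < dL z c₁ ∧ r < dL z c₂} := by
    intro r c₁ c₂
    exact (measurableSet_lt measurable_const (measurable_dL_right c₁)).inter
      (measurableSet_lt measurable_const (measurable_dL_right c₂))
  refine ⟨?_, ?_, ?_⟩
  · intro k
    have hμS : unif {z | rs < dL z xu ∧ rs < dL z xv}
        = ENNReal.ofReal (1 - (dL xu xv + 2 * rs)) := by
      have hmin : min (dL xu xv) (2 * rs) = dL xu xv := min_eq_left (by linarith)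
      have := unif_good hxu hxv hrs0 (by rw [hmin]; exact hx1)
      rwa [hmin] at this
    have hprod : {ω : (Fin m₁ → ℝ) × (Fin m₂ → ℝ) |
          (Finset.univ.filter fun i : Fin m₁ =>
            rs < dL (ω.1 i) xu ∧ rs < dL (ω.1 i) xv).card = k}
        = {f : Fin m₁ → ℝ | (Finset.univ.filter fun i : Fin m₁ =>
            rs < dL (f i) xu ∧ rs < dL (f i) xv).card = k} ×ˢ Set.univ := by
      rw [Set.prod_univ]; rfl
    rw [hprod, Measure.prod_prod, measure_univ, mul_one]
    exact count_binom unif (fun z => rs < dL z xu ∧ rs < dL z xv) (hSmeas rs xu xv)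
      (by linarith) (by linarith) hμS m₁ k
  · intro h2 k
    have hμS : unif {z | rd < dL z xu ∧ rd < dL z xv}
        = ENNReal.ofReal (1 - (dL xu xv + 2 * rd)) := by
      have hmin : min (dL xu xv) (2 * rd) = dL xu xv := min_eq_left h2
      have := unif_good hxu hxv hrd (by rw [hmin]; linarith)
      rwa [hmin] at this
    have hprod : {ω : (Fin m₁ → ℝ) × (Fin m₂ → ℝ) |
          (Finset.univ.filter fun j : Fin m₂ =>
            rd < dL (ω.2 j) xu ∧ rd < dL (ω.2 j) xv).card = k}
        = Set.univ ×ˢ {f : Fin m₂ → ℝ | (Finset.univ.filter fun j : Fin m₂ =>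
            rd < dL (f j) xu ∧ rd < dL (f j) xv).card = k} := by
      rw [Set.univ_prod]; rfl
    rw [hprod, Measure.prod_prod, measure_univ, one_mul]
    exact count_binom unif (fun z => rd < dL z xu ∧ rd < dL z xv) (hSmeas rd xu xv)
      (by linarith) (by linarith) hμS m₂ k
  · intro h3 k
    have hμS : unif {z | rd < dL z xu ∧ rd < dL z xv}
        = ENNReal.ofReal (1 - 4 * rd) := by
      have hmin : min (dL xu xv) (2 * rd) = 2 * rd := min_eq_right h3.le
      have := unif_good hxu hxv hrd (by rw [hmin]; linarith)
      rw [hmin] at this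
      rw [this]
      congr 1; ring
    have hprod : {ω : (Fin m₁ → ℝ) × (Fin m₂ → ℝ) |
          (Finset.univ.filter fun j : Fin m₂ =>
            rd < dL (ω.2 j) xu ∧ rd < dL (ω.2 j) xv).card = k}
        = Set.univ ×ˢ {f : Fin m₂ → ℝ | (Finset.univ.filter fun j : Fin m₂ =>
            rd < dL (f j) xu ∧ rd < dL (f j) xv).card = k} := by
      rw [Set.univ_prod]; rfl
    rw [hprod, Measure.prod_prod, measure_univ, one_mul]
    exact count_binom unif (fun z => rd < dL z xu ∧ rd < dL z xv) (hSmeas rd xu xv)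
      (by linarith) (by linarith) hμS m₂ k
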